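/- Assume κ > 0, ε > 0 and τ > 0. Let v ∈ ℝ^m with ‖v‖ ≤ 1 and let w : [0, τ] → ℝ^m be continuous with ‖w(s)‖ ≤ κ for all s ∈ [0, τ]. Then ‖exp(τL_κ)v + ∫₀^τ exp((τ−s)L_κ) w(s) ds‖ ≤ 1. -/

import Mathlib

open MeasureTheory

/-- The nonlinearity f(x) = x − x³. -/
noncomputable def fpt (x : ℝ) : ℝ := x - x ^ 3

/-- The function g(x) = 1 − x². -/
noncomputable def gpt (x : ℝ) : ℝ := 1 - x ^ 2

/-- The Lagrange multiplier λ(v) = (Σᵢ f(vᵢ)) / (Σᵢ g(vᵢ)). -/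
noncomputable def lam {m : ℕ} (v : Fin m → ℝ) : ℝ :=
  (∑ i, fpt (v i)) / (∑ i, gpt (v i))

/-- The stabilized nonlinear term N_κ(v)ᵢ = κ vᵢ + f(vᵢ) − λ(v) g(vᵢ). -/
noncomputable def Nk {m : ℕ} (κ : ℝ) (v : Fin m → ℝ) : Fin m → ℝ :=
  fun i => κ * v i + fpt (v i) - lam v * gpt (v i)

/-- The stabilized linear operator L_κ = ε²A − κ·Id. -/
noncomputable def Lk {m : ℕ} (A : (Fin m → ℝ) →L[ℝ] (Fin m → ℝ)) (ε κ : ℝ) :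
    (Fin m → ℝ) →L[ℝ] (Fin m → ℝ) :=
  ε ^ 2 • A - κ • ContinuousLinearMap.id ℝ (Fin m → ℝ)

/-- The ETD1 step Φ_τ(v) = exp(τL_κ)v + ∫₀^τ exp((τ−s)L_κ) N_κ(v) ds. -/
noncomputable def Phi {m : ℕ} (A : (Fin m → ℝ) →L[ℝ] (Fin m → ℝ)) (ε κ τ : ℝ)
    (v : Fin m → ℝ) : Fin m → ℝ :=
  (NormedSpace.exp (τ • Lk A ε κ)) v +
    ∫ s in (0 : ℝ)..τ, (NormedSpace.exp ((τ - s) • Lk A ε κ)) (Nk κ v)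

/-- The ETDRK2 step
Ψ_τ(v) = exp(τL_κ)v + ∫₀^τ exp((τ−s)L_κ)[(1−s/τ)N_κ(v) + (s/τ)N_κ(Φ_τ(v))] ds. -/
noncomputable def Psi {m : ℕ} (A : (Fin m → ℝ) →L[ℝ] (Fin m → ℝ)) (ε κ τ : ℝ)
    (v : Fin m → ℝ) : Fin m → ℝ :=
  (NormedSpace.exp (τ • Lk A ε κ)) v +
    ∫ s in (0 : ℝ)..τ, (NormedSpace.exp ((τ - s) • Lk A ε κ))
      ((1 - s / τ) • Nk κ v + (s / τ) • Nk κ (Phi A ε κ τ v))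

lemma exp_Lk_apply_le {m : ℕ} (A : (Fin m → ℝ) →L[ℝ] (Fin m → ℝ))
    (hC : ∀ t : ℝ, 0 ≤ t → ∀ v : Fin m → ℝ, ‖(NormedSpace.exp (t • A)) v‖ ≤ ‖v‖)
    (κ ε : ℝ) (hε : 0 ≤ ε) (t : ℝ) (ht : 0 ≤ t) (u : Fin m → ℝ) :
    ‖(NormedSpace.exp (t • Lk A ε κ)) u‖ ≤ Real.exp (-(κ * t)) * ‖u‖ := by
  have hdecomp : t • Lk A ε κ = (t * ε ^ 2) • A +
      algebraMap ℝ ((Fin m → ℝ) →L[ℝ] (Fin m → ℝ)) (-(κ * t)) := by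
    rw [Algebra.algebraMap_eq_smul_one]
    unfold Lk
    ext x i
    simp [smul_sub, smul_smul, mul_comm]
    ring
  have hcomm : Commute ((t * ε ^ 2) • A)
      (algebraMap ℝ ((Fin m → ℝ) →L[ℝ] (Fin m → ℝ)) (-(κ * t))) :=
    (Algebra.commutes _ _).symm
  let +nondep : NormedAlgebra ℚ ((Fin m → ℝ) →L[ℝ] (Fin m → ℝ)) := .restrictScalars ℚ ℝ _
  rw [hdecomp, NormedSpace.exp_add_of_commute hcomm,
    ← NormedSpace.algebraMap_exp_comm, ← Real.exp_eq_exp_ℝ]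
  have : (NormedSpace.exp ((t * ε ^ 2) • A) *
      algebraMap ℝ ((Fin m → ℝ) →L[ℝ] (Fin m → ℝ)) (Real.exp (-(κ * t)))) u
      = Real.exp (-(κ * t)) • (NormedSpace.exp ((t * ε ^ 2) • A)) u := by
    rw [Algebra.algebraMap_eq_smul_one]
    simp [ContinuousLinearMap.mul_apply]
  rw [this, norm_smul, Real.norm_eq_abs, abs_of_pos (Real.exp_pos _)]
  exact mul_le_mul_of_nonneg_left
    (hC (t * ε ^ 2) (mul_nonneg ht (pow_nonneg hε 2)) u) (Real.exp_pos _).le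

/-- The key MBP estimate: if ‖v‖_∞ ≤ 1 and ‖w(s)‖_∞ ≤ κ on [0,τ], then
‖exp(τL_κ)v + ∫₀^τ exp((τ−s)L_κ) w(s) ds‖_∞ ≤ 1. -/
theorem stmt_11 (m : ℕ) (hm : 1 ≤ m) (A : (Fin m → ℝ) →L[ℝ] (Fin m → ℝ))
    (hC : ∀ t : ℝ, 0 ≤ t → ∀ v : Fin m → ℝ, ‖(NormedSpace.exp (t • A)) v‖ ≤ ‖v‖)
    (κ ε τ : ℝ) (hκ : κ > 0) (hε : ε > 0) (hτ : τ > 0)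
    (v : Fin m → ℝ) (hv : ‖v‖ ≤ 1)
    (w : ℝ → Fin m → ℝ) (hwcont : ContinuousOn w (Set.Icc 0 τ))
    (hw : ∀ s ∈ Set.Icc (0 : ℝ) τ, ‖w s‖ ≤ κ) :
    ‖(NormedSpace.exp (τ • Lk A ε κ)) v +
        ∫ s in (0 : ℝ)..τ, (NormedSpace.exp ((τ - s) • Lk A ε κ)) (w s)‖ ≤ 1 := by
  have h1 : ‖(NormedSpace.exp (τ • Lk A ε κ)) v‖ ≤ Real.exp (-(κ * τ)) :=
    (exp_Lk_apply_le A hC κ ε hε.le τ hτ.le v).trans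
      (by nlinarith [Real.exp_pos (-(κ*τ)), hv])
  set g : ℝ → ℝ := fun s => κ * Real.exp (κ * (s - τ)) with hg
  have hgint : IntervalIntegrable g MeasureTheory.volume 0 τ := by
    apply Continuous.intervalIntegrable; continuity
  have hbound : ∀ᵐ s ∂(MeasureTheory.volume.restrict (Set.uIoc (0:ℝ) τ)),
      ‖(NormedSpace.exp ((τ - s) • Lk A ε κ)) (w s)‖ ≤ g s := by
    refine MeasureTheory.ae_restrict_of_forall_mem measurableSet_uIoc ?_
    intro s hs
    rw [Set.uIoc_of_le hτ.le] at hs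
    have hs' : s ∈ Set.Icc (0:ℝ) τ := ⟨hs.1.le, hs.2⟩
    calc ‖(NormedSpace.exp ((τ - s) • Lk A ε κ)) (w s)‖
        ≤ Real.exp (-(κ * (τ - s))) * ‖w s‖ :=
          exp_Lk_apply_le A hC κ ε hε.le (τ - s) (by linarith [hs.2]) (w s)
      _ ≤ Real.exp (-(κ * (τ - s))) * κ :=
          mul_le_mul_of_nonneg_left (hw s hs') (Real.exp_pos _).le
      _ = g s := by rw [hg]; ring_nf
  have h2 : ‖∫ s in (0:ℝ)..τ, (NormedSpace.exp ((τ - s) • Lk A ε κ)) (w s)‖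
      ≤ |∫ s in (0:ℝ)..τ, g s| :=
    intervalIntegral.norm_integral_le_abs_of_norm_le hbound hgint
  have hgval : ∫ s in (0:ℝ)..τ, g s = 1 - Real.exp (-(κ * τ)) := by
    have : ∀ s ∈ Set.uIcc (0:ℝ) τ,
        HasDerivAt (fun x => Real.exp (κ * (x - τ))) (g s) s := by
      intro s _
      have h := (Real.hasDerivAt_exp (κ * (s - τ))).comp s
        (((hasDerivAt_id s).sub_const τ).const_mul κ)
      simpa [hg, mul_comm, Function.comp_def] using h
    rw [intervalIntegral.integral_eq_sub_of_hasDerivAt this hgint]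
    simp [mul_comm]
  rw [hgval] at h2
  have hexp : Real.exp (-(κ * τ)) ≤ 1 :=
    Real.exp_le_one_iff.mpr (by nlinarith)
  rw [abs_of_nonneg (by linarith)] at h2
  calc ‖_ + _‖ ≤ _ := norm_add_le _ _
    _ ≤ Real.exp (-(κ*τ)) + (1 - Real.exp (-(κ*τ))) := add_le_add h1 h2
    _ = 1 := by ring
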